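/- Let G be a compact Hausdorff topological group and H a closed subgroup. If an invariant kernel k on G/H admits a continuous positive decomposition k = k₊ − k₋ with k₊, k₋ continuous positive definite kernels, then k admits a continuous positive decomposition into invariant kernels: there exist continuous PD kernels k₊', k₋' on G/H, each invariant under the canonical left G-action, with k = k₊' − k₋'. (The converse is immediate.) -/

import Mathlib

open scoped ComplexOrder

section Defs

variable {G : Type} [Group G] (H : Subgroup G)

/-- A kernel on `G/H` is positive definite if all its Gram matrices are positive
semidefinite. -/
def IsPDKernel (k : G ⧸ H → G ⧸ H → ℂ) : Prop :=
  ∀ (N : ℕ) (x : Fin N → G ⧸ H) (c : Fin N → ℂ),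
    0 ≤ ∑ i, ∑ j, (starRingEnd ℂ) (c i) * c j * k (x i) (x j)

/-- A kernel on `G/H` is invariant if it is invariant under the canonical left
`G`-action. -/
def IsInvariantKernel (k : G ⧸ H → G ⧸ H → ℂ) : Prop :=
  ∀ (g : G) (x y : G ⧸ H), k (g • x) (g • y) = k x y

end Defs


open MeasureTheory
open scoped BoundedContinuousFunction

noncomputable def kavg {G : Type} [Group G] [TopologicalSpace G] [IsTopologicalGroup G]
    [CompactSpace G] [T2Space G] [MeasurableSpace G] [BorelSpace G]
    (H : Subgroup G) (k0 : G ⧸ H → G ⧸ H → ℂ) (x y : G ⧸ H) : ℂ :=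
  ∫ g, k0 (g⁻¹ • x) (g⁻¹ • y)
    ∂(MeasureTheory.Measure.haarMeasure (⊤ : TopologicalSpace.PositiveCompacts G))

lemma aux {G : Type} [Group G] [TopologicalSpace G] [IsTopologicalGroup G]
    [CompactSpace G] [T2Space G] [MeasurableSpace G] [BorelSpace G]
    (H : Subgroup G) (k0 : G ⧸ H → G ⧸ H → ℂ)
    (hc : Continuous (Function.uncurry k0)) (hPD : IsPDKernel H k0) :
    Continuous (Function.uncurry (kavg H k0)) ∧
    IsPDKernel H (kavg H k0) ∧
    (∀ (g : G) (x y : G ⧸ H), kavg H k0 (g • x) (g • y) = kavg H k0 x y) ∧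
    ∀ x y : G ⧸ H, MeasureTheory.Integrable (fun g : G => k0 (g⁻¹ • x) (g⁻¹ • y))
      (MeasureTheory.Measure.haarMeasure (⊤ : TopologicalSpace.PositiveCompacts G)) := by
  set μ : Measure G := Measure.haarMeasure (⊤ : TopologicalSpace.PositiveCompacts G) with hμ
  haveI : IsProbabilityMeasure μ := ⟨by
    rw [hμ, ← TopologicalSpace.PositiveCompacts.coe_top (α := G)]
    exact Measure.haarMeasure_self⟩
  have hjc : Continuous fun p : ((G ⧸ H) × (G ⧸ H)) × G =>
      k0 (p.2⁻¹ • p.1.1) (p.2⁻¹ • p.1.2) := by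
    have h1 : Continuous fun p : ((G ⧸ H) × (G ⧸ H)) × G =>
        (p.2⁻¹ • p.1.1, p.2⁻¹ • p.1.2) := by fun_prop
    exact hc.comp h1
  have hcont_g : ∀ x y : G ⧸ H, Continuous fun g : G => k0 (g⁻¹ • x) (g⁻¹ • y) := by
    intro x y
    exact hc.comp (show Continuous fun g : G => (g⁻¹ • x, g⁻¹ • y) by fun_prop)
  have hint : ∀ x y : G ⧸ H, Integrable (fun g : G => k0 (g⁻¹ • x) (g⁻¹ • y)) μ :=
    fun x y => (hcont_g x y).integrable_of_hasCompactSupport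
      ((isClosed_tsupport _).isCompact)
  refine ⟨?_, ?_, ?_, hint⟩
  · -- continuity
    have hlip : LipschitzWith 1 fun f : G →ᵇ ℂ => ∫ g, f g ∂μ := by
      apply LipschitzWith.of_dist_le_mul
      intro f f'
      rw [dist_eq_norm, ← integral_sub (f.integrable μ) (f'.integrable μ)]
      calc ‖∫ g, (f g - f' g) ∂μ‖ ≤ ‖f - f'‖ := by
            simpa using (f - f').norm_integral_le_norm μ
        _ = 1 * dist f f' := by rw [one_mul, dist_eq_norm]
    have hcurry : Continuous fun p : (G ⧸ H) × (G ⧸ H) =>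
        (ContinuousMap.mk _ hjc).curry p := (ContinuousMap.mk _ hjc).curry.continuous
    have hbdd : Continuous fun p : (G ⧸ H) × (G ⧸ H) =>
        ContinuousMap.linearIsometryBoundedOfCompact G ℂ ℂ
          ((ContinuousMap.mk _ hjc).curry p) :=
      (ContinuousMap.linearIsometryBoundedOfCompact G ℂ ℂ).continuous.comp hcurry
    exact hlip.continuous.comp hbdd
  · -- PD
    intro N x c
    set f : G → ℂ := fun g => ∑ i, ∑ j, (starRingEnd ℂ) (c i) * c j *
        k0 (g⁻¹ • x i) (g⁻¹ • x j) with hf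
    have hnn : ∀ g : G, (0 : ℂ) ≤ f g := fun g => hPD N (fun i => g⁻¹ • x i) c
    have hfint : Integrable f μ := by
      apply integrable_finset_sum
      intro i _
      apply integrable_finset_sum
      intro j _
      exact (hint (x i) (x j)).const_mul _
    have key : ∑ i, ∑ j, (starRingEnd ℂ) (c i) * c j * kavg H k0 (x i) (x j)
        = ∫ g, f g ∂μ := by
      unfold kavg
      rw [integral_finset_sum _ fun i _ => by
        exact integrable_finset_sum _ fun j _ => (hint (x i) (x j)).const_mul _]
      refine Finset.sum_congr rfl fun i _ => ?_
      rw [integral_finset_sum _ fun j _ => (hint (x i) (x j)).const_mul _]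
      exact Finset.sum_congr rfl fun j _ => (integral_const_mul _ _).symm
    rw [key]
    have hre : ∀ g, f g = ((f g).re : ℂ) := by
      intro g
      have h := hnn g
      rw [Complex.le_def] at h
      have him : (f g).im = 0 := by
        simpa only [Complex.zero_im] using h.2.symm
      exact Complex.ext (by simp) (by simp [him])
    calc (0 : ℂ) ≤ ((∫ g, (f g).re ∂μ : ℝ) : ℂ) := by
          rw [Complex.le_def]
          refine ⟨?_, by simp⟩
          simp only [Complex.zero_re, Complex.ofReal_re]
          refine integral_nonneg fun g => ?_
          have h := hnn g
          rw [Complex.le_def] at h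
          simpa only [Complex.zero_re, Pi.zero_apply] using h.1
      _ = ∫ g, ((f g).re : ℂ) ∂μ := integral_ofReal.symm
      _ = ∫ g, f g ∂μ := by
          congr 1
          ext g
          exact (hre g).symm
  · -- invariance
    intro g x y
    unfold kavg
    have h2 : (fun g' : G => k0 (g'⁻¹ • (g • x)) (g'⁻¹ • (g • y)))
        = fun g' : G => k0 ((g'⁻¹ * g) • x) ((g'⁻¹ * g) • y) := by
      funext g'
      rw [mul_smul, mul_smul]
    rw [h2]
    have h3 := integral_mul_left_eq_self (μ := μ)
      (fun g' : G => k0 ((g'⁻¹ * g) • x) ((g'⁻¹ * g) • y)) g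
    rw [← h3]
    congr 1
    funext g'
    rw [mul_inv_rev, mul_assoc]
    simp

/-- on a compact group `G` with closed subgroup `H`, an invariant
Hermitian kernel on `G/H` admitting a continuous positive decomposition admits a
continuous positive decomposition into invariant kernels. -/
theorem invariant_kernel_invariant_positive_decomposition_of_compact
    {G : Type} [Group G] [TopologicalSpace G] [IsTopologicalGroup G]
    [CompactSpace G] [T2Space G]
    (H : Subgroup G) (hH : IsClosed (H : Set G))
    (k : G ⧸ H → G ⧸ H → ℂ)
    (hherm : ∀ x y, k y x = (starRingEnd ℂ) (k x y))
    (hinv : IsInvariantKernel H k)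
    (kp km : G ⧸ H → G ⧸ H → ℂ)
    (hkpc : Continuous (Function.uncurry kp)) (hkpPD : IsPDKernel H kp)
    (hkmc : Continuous (Function.uncurry km)) (hkmPD : IsPDKernel H km)
    (hdec : ∀ x y, k x y = kp x y - km x y) :
    ∃ kp' km' : G ⧸ H → G ⧸ H → ℂ,
      Continuous (Function.uncurry kp') ∧ IsPDKernel H kp' ∧ IsInvariantKernel H kp' ∧
      Continuous (Function.uncurry km') ∧ IsPDKernel H km' ∧ IsInvariantKernel H km' ∧
      ∀ x y, k x y = kp' x y - km' x y := by
  borelize G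
  set μ : MeasureTheory.Measure G :=
    MeasureTheory.Measure.haarMeasure (⊤ : TopologicalSpace.PositiveCompacts G) with hμ
  haveI : MeasureTheory.IsProbabilityMeasure μ := ⟨by
    rw [hμ, ← TopologicalSpace.PositiveCompacts.coe_top (α := G)]
    exact MeasureTheory.Measure.haarMeasure_self⟩
  obtain ⟨hpc, hpPD, hpinv, hpint⟩ := aux H kp hkpc hkpPD
  obtain ⟨hmc, hmPD, hminv, hmint⟩ := aux H km hkmc hkmPD
  refine ⟨kavg H kp, kavg H km, hpc, hpPD, hpinv, hmc, hmPD, hminv, ?_⟩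
  intro x y
  have h1 : kavg H kp x y - kavg H km x y
      = ∫ g, (kp (g⁻¹ • x) (g⁻¹ • y) - km (g⁻¹ • x) (g⁻¹ • y)) ∂μ := by
    rw [MeasureTheory.integral_sub (hpint x y) (hmint x y)]
    rfl
  rw [h1]
  have h2 : ∀ g : G, kp (g⁻¹ • x) (g⁻¹ • y) - km (g⁻¹ • x) (g⁻¹ • y) = k x y := by
    intro g
    rw [← hdec]
    exact hinv g⁻¹ x y
  simp_rw [h2]
  simp
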